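/- arXiv:1106.4535 — 2 statements merged into one kernel-verified Lean document; each statement's English description precedes it below -/
import Mathlib

section
/- In the groupoid of germs of the action of the tiling inverse semigroup S on Ω_punc, two pairs ([t₁,P,t₂],T) and ([t₁',P',t₂'],T') are equivalent (have the same germ) if and only if T = T', t₁ = t₁', t₂ = t₂', and there exists a patch P'' containing P ∪ P' together with a tile t ∈ P'' such that T ∈ U(P'',t). -/
/- Shared framework: tilings of ℝⁿ and the tiling inverse semigroup (Kellendonk),
   following Exel–Gonçalves–Starling. -/
open Set
open scoped Classical
noncomputable section

abbrev Rn (n : ℕ) := EuclideanSpace ℝ (Fin n)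

/-- A prototile: a subset of ℝⁿ homeomorphic to the closed unit ball, carrying a label,
with the origin (the designated puncture) in its interior. -/
structure ProtoTile (n : ℕ) where
  carrier : Set (Rn n)
  label : ℕ
  ball_like : Nonempty (carrier ≃ₜ (Metric.closedBall (0 : Rn n) 1 : Set (Rn n)))
  origin_mem : (0 : Rn n) ∈ interior carrier

/-- A tile: a translate `p + x` of a prototile `p`; `puncture` is the translation vector,
i.e. the designated point `x(t)` of the tile. -/
structure Tile (n : ℕ) where
  proto : ProtoTile n
  puncture : Rn n

namespace Tile

def carrier {n : ℕ} (t : Tile n) : Set (Rn n) := (fun y => y + t.puncture) '' t.proto.carrier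

def translate {n : ℕ} (t : Tile n) (x : Rn n) : Tile n := ⟨t.proto, t.puncture + x⟩

end Tile

/-- `T + x`, the translate of a collection of tiles. -/
def translateSet {n : ℕ} (T : Set (Tile n)) (x : Rn n) : Set (Tile n) :=
  (fun t => t.translate x) '' T

/-- A partial tiling: tiles with pairwise disjoint interiors. -/
def IsPartialTiling {n : ℕ} (T : Set (Tile n)) : Prop :=
  T.Pairwise fun t t' => interior t.carrier ∩ interior t'.carrier = ∅

/-- The support of a partial tiling. -/
def tsupport' {n : ℕ} (T : Set (Tile n)) : Set (Rn n) := ⋃ t ∈ T, t.carrier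

/-- A tiling: a partial tiling whose support is all of ℝⁿ. -/
def IsTiling {n : ℕ} (T : Set (Tile n)) : Prop := IsPartialTiling T ∧ tsupport' T = univ

/-- A patch: a finite partial tiling. -/
def IsPatch {n : ℕ} (P : Set (Tile n)) : Prop := IsPartialTiling P ∧ P.Finite

/-- `T(U)`: the tiles of `T` meeting the set `U`. -/
def tilesMeeting {n : ℕ} (T : Set (Tile n)) (U : Set (Rn n)) : Set (Tile n) :=
  {t | t ∈ T ∧ (t.carrier ∩ U).Nonempty}

/-- The tiling metric. -/
def tdist {n : ℕ} (T T' : Set (Tile n)) : ℝ :=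
  sInf ({1} ∪ {ε : ℝ | 0 < ε ∧ ∃ x x' : Rn n, ‖x‖ < ε ∧ ‖x'‖ < ε ∧
    tilesMeeting (translateSet T (-x)) (Metric.ball (0 : Rn n) (1/ε)) =
      tilesMeeting (translateSet T' (-x')) (Metric.ball (0 : Rn n) (1/ε))})

/-- Finite local complexity: for each `r > 0` there are only finitely many patches
`T(B(x,r))` up to translation. -/
def FLC {n : ℕ} (T : Set (Tile n)) : Prop :=
  ∀ r : ℝ, 0 < r → ∃ F : Set (Set (Tile n)), F.Finite ∧
    ∀ x : Rn n, ∃ P ∈ F, ∃ y : Rn n, tilesMeeting T (Metric.ball x r) = translateSet P y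

/-- Repetitivity. -/
def Repetitive {n : ℕ} (T : Set (Tile n)) : Prop :=
  ∀ P ⊆ T, IsPatch P → ∃ R : ℝ, 0 < R ∧ ∀ x : Rn n, ∃ y : Rn n,
    translateSet P y ⊆ tilesMeeting T (Metric.ball x R)

def IsPeriodic {n : ℕ} (T : Set (Tile n)) : Prop :=
  ∃ x : Rn n, x ≠ 0 ∧ translateSet T x = T

/-- The continuous hull `Ω_T`, characterized as the set of all tilings every patch of
which appears as a translate of a patch of `T`. -/
def hull {n : ℕ} (T : Set (Tile n)) : Set (Set (Tile n)) :=
  {T' | IsTiling T' ∧ ∀ P ⊆ T', IsPatch P → ∃ x : Rn n, translateSet P x ⊆ T}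

/-- Strong aperiodicity: the hull contains no periodic tiling. -/
def StronglyAperiodic {n : ℕ} (T : Set (Tile n)) : Prop := ∀ T' ∈ hull T, ¬ IsPeriodic T'

/-- The punctured hull: tilings of the hull with a puncture at the origin. -/
def puncturedHull {n : ℕ} (T : Set (Tile n)) : Set (Set (Tile n)) :=
  {T' | T' ∈ hull T ∧ ∃ t ∈ T', t.puncture = 0}

/-- `U(P,t) = {T' : P - x(t) ⊆ T'}`. -/
def U {n : ℕ} (P : Set (Tile n)) (t : Tile n) : Set (Set (Tile n)) :=
  {T' | translateSet P (-t.puncture) ⊆ T'}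

/-- The (tiling-metric) topology on the punctured hull: generated by the balls of `tdist`. -/
def punctopology {n : ℕ} (T : Set (Tile n)) : TopologicalSpace ↥(puncturedHull T) :=
  TopologicalSpace.generateFrom
    {V | ∃ T₀ ∈ puncturedHull T, ∃ ε : ℝ, 0 < ε ∧
      V = {T' : ↥(puncturedHull T) | tdist (T' : Set (Tile n)) T₀ < ε}}

/-- A representative `(t₁, P, t₂)` of a doubly-pointed pattern class of the tiling `T`:
`P` is a patch occurring in `T` whose support has connected interior, `t₁, t₂ ∈ P`. -/
structure SRep (n : ℕ) (T : Set (Tile n)) where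
  t1 : Tile n
  t2 : Tile n
  P : Set (Tile n)
  mem1 : t1 ∈ P
  mem2 : t2 ∈ P
  patch : IsPatch P
  conn : IsConnected (interior (tsupport' P))
  occurs : ∃ x : Rn n, translateSet P x ⊆ T

namespace SRep

variable {n : ℕ} {T : Set (Tile n)}

/-- The involution `[t₁,P,t₂]* = [t₂,P,t₁]`. -/
def star (s : SRep n T) : SRep n T := ⟨s.t2, s.t1, s.P, s.mem2, s.mem1, s.patch, s.conn, s.occurs⟩

/-- A representative of `s* s = [t₂,P,t₂]`. -/
def srcIdem (s : SRep n T) : SRep n T :=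
  ⟨s.t2, s.t2, s.P, s.mem2, s.mem2, s.patch, s.conn, s.occurs⟩

/-- A representative of `s s* = [t₁,P,t₁]`. -/
def ranIdem (s : SRep n T) : SRep n T :=
  ⟨s.t1, s.t1, s.P, s.mem1, s.mem1, s.patch, s.conn, s.occurs⟩

/-- Two triples represent the same doubly-pointed pattern class. -/
def Equiv' (a b : SRep n T) : Prop :=
  ∃ x : Rn n, a.t1.translate x = b.t1 ∧ a.t2.translate x = b.t2 ∧ translateSet a.P x = b.P

/-- The product `[t₁,P,t₂][t₁',P',t₂']` is nonzero: there are translations making both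
patches of `T` with `t₂ + x = t₁' + x'`. -/
def Compat (a b : SRep n T) : Prop :=
  ∃ x x' : Rn n, translateSet a.P x ⊆ T ∧ translateSet b.P x' ⊆ T ∧
    a.t2.translate x = b.t1.translate x'

/-- `c` represents the (nonzero) product of the classes of `a` and `b`:
`[t₁+x, (P+x) ∪ (P'+x'), t₂'+x']`. -/
def Prod' (a b c : SRep n T) : Prop :=
  ∃ x x' : Rn n, translateSet a.P x ⊆ T ∧ translateSet b.P x' ⊆ T ∧
    a.t2.translate x = b.t1.translate x' ∧
    ∃ y : Rn n, c.t1.translate y = a.t1.translate x ∧ c.t2.translate y = b.t2.translate x' ∧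
      translateSet c.P y = translateSet a.P x ∪ translateSet b.P x'

/-- The natural order on idempotent classes, concretely: `e ≤ f` iff for suitable
representatives `t = t'` and `P' ⊆ P`. -/
def le (e f : SRep n T) : Prop :=
  ∃ x : Rn n, f.t1.translate x = e.t1 ∧ translateSet f.P x ⊆ e.P

end SRep

/-- `g` represents `s* e s`. -/
def Prod3 {n : ℕ} {T : Set (Tile n)} (s e g : SRep n T) : Prop :=
  ∃ a : SRep n T, SRep.Prod' (SRep.star s) e a ∧ SRep.Prod' a s g

/-- A filter in the idempotent semilattice `E` of the tiling inverse semigroup, encoded as a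
translation-saturated set of idempotent representatives: nonempty, upward closed and downward
directed (zero is excluded automatically since only nonzero idempotents have representatives). -/
def IsFilterE {n : ℕ} (T : Set (Tile n)) (ξ : Set (SRep n T)) : Prop :=
  ξ.Nonempty ∧ (∀ e ∈ ξ, e.t1 = e.t2) ∧
  (∀ e ∈ ξ, ∀ f : SRep n T, f.t1 = f.t2 → SRep.le e f → f ∈ ξ) ∧
  (∀ e ∈ ξ, ∀ f ∈ ξ, ∃ g ∈ ξ, SRep.le g e ∧ SRep.le g f)

/-- An ultrafilter: a maximal filter. -/
def IsUltraE {n : ℕ} (T : Set (Tile n)) (ξ : Set (SRep n T)) : Prop :=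
  IsFilterE T ξ ∧ ∀ ζ : Set (SRep n T), IsFilterE T ζ → ξ ⊆ ζ → ζ = ξ

/-- `ξ_{T₀} = {[t,P,t] : t = T₀(0), t ∈ P ⊆ T₀}`: the idempotents whose patch, positioned with
its distinguished tile having puncture at the origin, lies in `T₀`. -/
def xiOf {n : ℕ} (T : Set (Tile n)) (T₀ : Set (Tile n)) : Set (SRep n T) :=
  {e | e.t1 = e.t2 ∧ ∃ x : Rn n, (e.t1.translate x).puncture = 0 ∧
    e.t1.translate x ∈ T₀ ∧ translateSet e.P x ⊆ T₀}

/-- The partial tiling `⋃ {P : [t,P,t] ∈ ξ}` associated to a filter (each patch positioned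
with the puncture of its distinguished tile at the origin). -/
def tilingOf {n : ℕ} {T : Set (Tile n)} (ξ : Set (SRep n T)) : Set (Tile n) :=
  ⋃ e ∈ ξ, translateSet e.P (-(e.t1.puncture))

/-- A character of the idempotent semilattice `E`: nonzero, constant on classes,
multiplicative, and vanishing on zero products. -/
def IsCharE {n : ℕ} (T : Set (Tile n)) (φ : SRep n T → Bool) : Prop :=
  (∃ e, φ e = true) ∧
  (∀ e f : SRep n T, SRep.Equiv' e f → φ e = φ f) ∧
  (∀ e f g : SRep n T, e.t1 = e.t2 → f.t1 = f.t2 → SRep.Prod' e f g → φ g = (φ e && φ f)) ∧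
  (∀ e f : SRep n T, e.t1 = e.t2 → f.t1 = f.t2 → ¬ SRep.Compat e f →
    ¬(φ e = true ∧ φ f = true))

/-- The character `φ_{T₀}` of a tiling `T₀` of the punctured hull. -/
def charOf {n : ℕ} (T : Set (Tile n)) (T₀ : Set (Tile n)) : SRep n T → Bool :=
  fun e => decide (e ∈ xiOf T T₀)

/-- A point `(s, T')` of the set `Y`: `T' ∈ Ω_punc` lies in the domain `U(P,t₂)` of `θ_s`. -/
structure GermPt (n : ℕ) (T : Set (Tile n)) where
  s : SRep n T
  tl : Set (Tile n)
  mem_hull : tl ∈ puncturedHull T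
  mem_dom : tl ∈ U s.P s.t2

/-- The germ relation: `(s,T') ∼ (s'',T'')` iff `T' = T''` and there is an idempotent
`e = [t,P'',t]` with `T' ∈ U(P'',t)` and `s e = s'' e` (as classes). -/
def GermRel {n : ℕ} (T : Set (Tile n)) (p q : GermPt n T) : Prop :=
  p.tl = q.tl ∧ ∃ e : SRep n T, e.t1 = e.t2 ∧ p.tl ∈ U e.P e.t1 ∧
    ∃ g h : SRep n T, SRep.Prod' p.s e g ∧ SRep.Prod' q.s e h ∧ SRep.Equiv' g h

/-- The germ topology on the groupoid of germs: basic open sets `Θ(s,V)` for `V` an open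
subset of `U(P,t₂)`. -/
def germTop {n : ℕ} (T : Set (Tile n)) : TopologicalSpace (Quot (GermRel T)) :=
  TopologicalSpace.generateFrom
    {W | ∃ (s : SRep n T) (V : Set (Set (Tile n))),
      (letI := punctopology T;
        IsOpen {T' : ↥(puncturedHull T) | (T' : Set (Tile n)) ∈ V}) ∧
      V ⊆ U s.P s.t2 ∧
      W = {g | ∃ p : GermPt n T, p.s = s ∧ p.tl ∈ V ∧ Quot.mk (GermRel T) p = g}}

/-- `R_punc`: pairs `(T' + x, T')` of punctured-hull tilings which are translates. -/
def RpuncSet {n : ℕ} (T : Set (Tile n)) : Set (Set (Tile n) × Set (Tile n)) :=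
  {q | q.1 ∈ puncturedHull T ∧ q.2 ∈ puncturedHull T ∧ ∃ x : Rn n, q.1 = translateSet q.2 x}

/-- The topology `R_punc` inherits from `Ω_punc × ℝⁿ`. -/
def rpuncTop {n : ℕ} (T : Set (Tile n)) : TopologicalSpace ↥(RpuncSet T) :=
  letI := punctopology T
  TopologicalSpace.induced
    (fun q : ↥(RpuncSet T) =>
      ((⟨q.val.2, q.property.2.1⟩ : ↥(puncturedHull T)), Classical.choose q.property.2.2))
    inferInstance

section Helpers

variable {n : ℕ}

lemma Tile.translate_zero (t : Tile n) : t.translate 0 = t := by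
  cases t; simp [Tile.translate]

lemma translateSet_zero (P : Set (Tile n)) : translateSet P 0 = P := by
  simp [translateSet, Tile.translate_zero]

lemma translateSet_union (A B : Set (Tile n)) (x : Rn n) :
    translateSet (A ∪ B) x = translateSet A x ∪ translateSet B x :=
  Set.image_union _ _ _

lemma translateSet_mono {A B : Set (Tile n)} (h : A ⊆ B) (x : Rn n) :
    translateSet A x ⊆ translateSet B x :=
  Set.image_mono h

lemma tile_ext {a b : Tile n} (h1 : a.proto = b.proto) (h2 : a.puncture = b.puncture) :
    a = b := by
  cases a; cases b; simp_all

lemma translate_eq_elim {a b : Tile n} {x y : Rn n}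
    (h : a.translate x = b.translate y) :
    a.proto = b.proto ∧ a.puncture + x = b.puncture + y := by
  rw [Tile.translate, Tile.translate, Tile.mk.injEq] at h
  exact h

lemma proto_eq_of_translate_eq {a b : Tile n} {x y : Rn n}
    (h : a.translate x = b.translate y) : a.proto = b.proto :=
  (translate_eq_elim h).1

lemma punct_eq_of_translate_eq {a b : Tile n} {x y : Rn n}
    (h : a.translate x = b.translate y) : a.puncture + x = b.puncture + y :=
  (translate_eq_elim h).2

lemma translate_eq_elim' {a b : Tile n} {x : Rn n} (h : a.translate x = b) :
    a.proto = b.proto ∧ a.puncture + x = b.puncture := by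
  subst h; exact ⟨rfl, rfl⟩

lemma germ_alg {G : Type*} [AddCommGroup G]
    (pt1 qt1 gt1 gt2 ht1 ht2 et1 et2 x x' y a a' b z : G)
    (e1 : (0:G) + x = et1 + x')
    (e2 : gt1 + y = pt1 + x)
    (e3 : gt2 + y = et2 + x')
    (e4 : (0:G) + a = et1 + a')
    (e5 : ht1 + b = qt1 + a)
    (e6 : ht2 + b = et2 + a')
    (e7 : gt1 + z = ht1)
    (e8 : gt2 + z = ht2) : pt1 = qt1 := by
  have hx : x = et1 + x' := by rw [← e1, zero_add]
  have ha : a = et1 + a' := by rw [← e4, zero_add]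
  have hy : y = et2 + x' - gt2 := by rw [← e3]; abel
  have hb : b = et2 + a' - ht2 := by rw [← e6]; abel
  have hpt1 : pt1 = gt1 + y - x := by rw [e2]; abel
  have hqt1 : qt1 = ht1 + b - a := by rw [e5]; abel
  rw [hpt1, hqt1, hy, hb, hx, ha, ← e7, ← e8]; abel

lemma tile_carrier_isCompact (t : Tile n) : IsCompact t.carrier := by
  have h1 : IsCompact t.proto.carrier := by
    obtain ⟨e⟩ := t.proto.ball_like
    have h2 : CompactSpace (Metric.closedBall (0 : Rn n) 1 : Set (Rn n)) :=
      isCompact_iff_compactSpace.mp (isCompact_closedBall _ _)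
    have h3 : CompactSpace t.proto.carrier := e.symm.compactSpace
    exact isCompact_iff_compactSpace.mpr h3
  exact h1.image (continuous_add_right t.puncture)

lemma tsupport'_isClosed {P : Set (Tile n)} (hP : P.Finite) : IsClosed (tsupport' P) :=
  hP.isClosed_biUnion fun t _ => (tile_carrier_isCompact t).isClosed

lemma puncture_mem_interior_carrier (t : Tile n) : t.puncture ∈ interior t.carrier :=
  (isOpenMap_add_right t.puncture).image_interior_subset _
    ⟨0, t.proto.origin_mem, zero_add _⟩

lemma tsupport'_union (A B : Set (Tile n)) :
    tsupport' (A ∪ B) = tsupport' A ∪ tsupport' B :=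
  Set.biUnion_union _ _ _

lemma carrier_subset_tsupport' {P : Set (Tile n)} {t : Tile n} (h : t ∈ P) :
    t.carrier ⊆ tsupport' P :=
  Set.subset_biUnion_of_mem h

lemma interior_union_connected {X : Type*} [TopologicalSpace X] {A B : Set X}
    (hA : IsClosed A) (hB : IsClosed B)
    (hiA : IsConnected (interior A)) (hiB : IsConnected (interior B))
    (hmeet : (interior A ∩ interior B).Nonempty) :
    IsConnected (interior (A ∪ B)) := by
  have hCA : interior A ⊆ interior (A ∪ B) := interior_mono Set.subset_union_left
  have hCB : interior B ⊆ interior (A ∪ B) := interior_mono Set.subset_union_right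
  have hsub : interior A ∪ interior B ⊆ interior (A ∪ B) := Set.union_subset hCA hCB
  have hC : IsConnected (interior A ∪ interior B) :=
    IsConnected.union hmeet hiA hiB
  refine ⟨hC.nonempty.mono hsub, ?_⟩
  refine hC.isPreconnected.subset_closure hsub ?_
  intro ζ hζ
  rw [mem_closure_iff]
  intro o ho hzo
  by_contra hcon
  rw [Set.not_nonempty_iff_eq_empty] at hcon
  set W := o ∩ interior (A ∪ B) with hWdef
  have hW : IsOpen W := ho.inter isOpen_interior
  have hzW : ζ ∈ W := ⟨hzo, hζ⟩
  have hWAB : W ⊆ A ∪ B := fun w hw => interior_subset hw.2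
  have hWiA : W ∩ interior A = ∅ := by
    rw [Set.eq_empty_iff_forall_notMem]
    intro w hw
    have : w ∈ o ∩ (interior A ∪ interior B) := ⟨hw.1.1, Or.inl hw.2⟩
    rw [hcon] at this; exact this
  have hWiB : W ∩ interior B = ∅ := by
    rw [Set.eq_empty_iff_forall_notMem]
    intro w hw
    have : w ∈ o ∩ (interior A ∪ interior B) := ⟨hw.1.1, Or.inr hw.2⟩
    rw [hcon] at this; exact this
  rcases (W \ A).eq_empty_or_nonempty with hE | hNE
  · have hWA : W ⊆ A := by
      intro w hw
      by_contra hwA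
      exact (Set.eq_empty_iff_forall_notMem.mp hE w) ⟨hw, hwA⟩
    have : W ⊆ interior A := interior_maximal hWA hW
    exact (Set.eq_empty_iff_forall_notMem.mp hWiA ζ) ⟨hzW, this hzW⟩
  · obtain ⟨w, hwW, hwA⟩ := hNE
    have hopen : IsOpen (W \ A) := hW.sdiff hA
    have hWB : W \ A ⊆ B := fun u hu => (hWAB hu.1).resolve_left hu.2
    have : W \ A ⊆ interior B := interior_maximal hWB hopen
    exact (Set.eq_empty_iff_forall_notMem.mp hWiB w) ⟨hwW, this ⟨hwW, hwA⟩⟩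

lemma germpt_P_subset {T : Set (Tile n)} (p : GermPt n T) (hp : p.s.t2.puncture = 0) :
    p.s.P ⊆ p.tl := by
  have h := p.mem_dom
  simp only [U, Set.mem_setOf_eq, hp, neg_zero, translateSet_zero] at h
  exact h

end Helpers

/-- Characterization of the germ relation for the action of the tiling inverse semigroup on
the punctured hull (representatives positioned with the puncture of `t₂` at the origin):
`([t₁,P,t₂],T') ∼ ([t₁',P',t₂'],T'')` iff `T' = T''`, `t₁ = t₁'`, `t₂ = t₂'`, and there is a
patch `P'' ⊇ P ∪ P'` occurring in `T` and a tile `t ∈ P''` with `T' ∈ U(P'',t)`. -/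
theorem germRel_characterization {n : ℕ} (T : Set (Tile n)) (hT : IsTiling T)
    (hFLC : FLC T) (hrep : Repetitive T) (hap : StronglyAperiodic T)
    (p q : GermPt n T) (hp : p.s.t2.puncture = 0) (hq : q.s.t2.puncture = 0) :
    GermRel T p q ↔
      (p.tl = q.tl ∧ p.s.t1 = q.s.t1 ∧ p.s.t2 = q.s.t2 ∧
        ∃ (P'' : Set (Tile n)) (t : Tile n), IsPatch P'' ∧
          (∃ x : Rn n, translateSet P'' x ⊆ T) ∧ t ∈ P'' ∧
          p.s.P ∪ q.s.P ⊆ P'' ∧ p.tl ∈ U P'' t) := by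
  have hpsub : p.s.P ⊆ p.tl := germpt_P_subset p hp
  have hptiling : IsPartialTiling p.tl := p.mem_hull.1.1.1
  constructor
  · rintro ⟨htl, e, he12, heU, g, h,
      ⟨x, x', hxT, hx'T, heq, y, hy1, hy2, hyP⟩,
      ⟨a, a', haT, ha'T, heq2, b, hb1, hb2, hbP⟩,
      ⟨z, hz1, hz2, hzP⟩⟩
    have hqsub : q.s.P ⊆ p.tl := htl ▸ germpt_P_subset q hq
    have ht2 : p.s.t2 = q.s.t2 := by
      refine tile_ext ?_ (hp.trans hq.symm)
      have h1 : p.s.t2.proto = e.t1.proto := proto_eq_of_translate_eq heq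
      have h2 : q.s.t2.proto = e.t1.proto := proto_eq_of_translate_eq heq2
      rw [h1, h2]
    have ht1 : p.s.t1 = q.s.t1 := by
      refine tile_ext ?_ ?_
      · have h1 : g.t1.proto = p.s.t1.proto := proto_eq_of_translate_eq hy1
        have h2 : g.t1.proto = h.t1.proto := (translate_eq_elim' hz1).1
        have h3 : h.t1.proto = q.s.t1.proto := proto_eq_of_translate_eq hb1
        rw [← h1, h2, h3]
      · have e1 : (0 : Rn n) + x = e.t1.puncture + x' := by
          rw [← hp]; exact punct_eq_of_translate_eq heq
        have e4 : (0 : Rn n) + a = e.t1.puncture + a' := by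
          rw [← hq]; exact punct_eq_of_translate_eq heq2
        exact germ_alg p.s.t1.puncture q.s.t1.puncture g.t1.puncture g.t2.puncture
          h.t1.puncture h.t2.puncture e.t1.puncture e.t2.puncture x x' y a a' b z
          e1 (punct_eq_of_translate_eq hy1) (punct_eq_of_translate_eq hy2)
          e4 (punct_eq_of_translate_eq hb1) (punct_eq_of_translate_eq hb2)
          (translate_eq_elim' hz1).2 (translate_eq_elim' hz2).2
    have hsub : p.s.P ∪ q.s.P ⊆ p.tl := Set.union_subset hpsub hqsub
    have hpatch : IsPatch (p.s.P ∪ q.s.P) :=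
      ⟨hptiling.mono hsub, p.s.patch.2.union q.s.patch.2⟩
    refine ⟨htl, ht1, ht2, p.s.P ∪ q.s.P, p.s.t2, hpatch,
      p.mem_hull.1.2 _ hsub hpatch, Or.inl p.s.mem2, subset_rfl, ?_⟩
    show translateSet (p.s.P ∪ q.s.P) (-p.s.t2.puncture) ⊆ p.tl
    rw [hp, neg_zero, translateSet_zero]
    exact hsub
  · rintro ⟨htl, ht1, ht2, P'', t, hP''patch, ⟨x₀, hx₀⟩, htP, hsubP'', hUP⟩
    have hqsub : q.s.P ⊆ p.tl := htl ▸ germpt_P_subset q hq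
    set Q : Set (Tile n) := q.s.P ∪ p.s.P with hQdef
    have hQsub : Q ⊆ p.tl := Set.union_subset hqsub hpsub
    have hQpatch : IsPatch Q := ⟨hptiling.mono hQsub, q.s.patch.2.union p.s.patch.2⟩
    have hQocc : ∃ v : Rn n, translateSet Q v ⊆ T := by
      refine ⟨x₀, (translateSet_mono ?_ x₀).trans hx₀⟩
      exact Set.union_subset (fun u hu => hsubP'' (Or.inr hu)) (fun u hu => hsubP'' (Or.inl hu))
    have hQconn : IsConnected (interior (tsupport' Q)) := by
      rw [hQdef, tsupport'_union]
      refine interior_union_connected (tsupport'_isClosed q.s.patch.2)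
        (tsupport'_isClosed p.s.patch.2) q.s.conn p.s.conn ?_
      refine ⟨p.s.t2.puncture, ?_, ?_⟩
      · exact interior_mono (carrier_subset_tsupport' (ht2 ▸ q.s.mem2))
          (puncture_mem_interior_carrier p.s.t2)
      · exact interior_mono (carrier_subset_tsupport' p.s.mem2)
          (puncture_mem_interior_carrier p.s.t2)
    have hpT : translateSet p.s.P x₀ ⊆ T :=
      (translateSet_mono (fun u hu => hsubP'' (Or.inl hu)) x₀).trans hx₀
    have hqT : translateSet q.s.P x₀ ⊆ T :=
      (translateSet_mono (fun u hu => hsubP'' (Or.inr hu)) x₀).trans hx₀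
    have hQT : translateSet Q x₀ ⊆ T := hQocc.elim (fun _ _ => by
      exact (translateSet_union _ _ _) ▸ Set.union_subset hqT hpT)
    refine ⟨htl, ⟨p.s.t2, p.s.t2, Q, Or.inr p.s.mem2, Or.inr p.s.mem2, hQpatch, hQconn, hQocc⟩,
      rfl, ?_,
      ⟨p.s.t1, p.s.t2, Q, Or.inr p.s.mem1, Or.inr p.s.mem2, hQpatch, hQconn, hQocc⟩,
      ⟨q.s.t1, q.s.t2, Q, Or.inl q.s.mem1, Or.inl q.s.mem2, hQpatch, hQconn, hQocc⟩,
      ?_, ?_, ?_⟩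
    · show translateSet Q (-p.s.t2.puncture) ⊆ p.tl
      rw [hp, neg_zero, translateSet_zero]
      exact hQsub
    · -- Prod' p.s e g
      refine ⟨x₀, x₀, hpT, hQT, rfl, x₀, rfl, rfl, ?_⟩
      show translateSet Q x₀ = translateSet p.s.P x₀ ∪ translateSet Q x₀
      rw [Set.union_eq_self_of_subset_left
        (translateSet_mono (Set.subset_union_right) x₀)]
    · -- Prod' q.s e h
      refine ⟨x₀, x₀, hqT, hQT, ?_, x₀, rfl, ?_, ?_⟩
      · show q.s.t2.translate x₀ = p.s.t2.translate x₀
        rw [ht2]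
      · show q.s.t2.translate x₀ = p.s.t2.translate x₀
        rw [ht2]
      · show translateSet Q x₀ = translateSet q.s.P x₀ ∪ translateSet Q x₀
        rw [Set.union_eq_self_of_subset_left
          (translateSet_mono (Set.subset_union_left) x₀)]
    · -- Equiv' g h
      refine ⟨0, ?_, ?_, ?_⟩
      · show p.s.t1.translate 0 = q.s.t1
        rw [Tile.translate_zero, ht1]
      · show p.s.t2.translate 0 = q.s.t2
        rw [Tile.translate_zero, ht2]
      · show translateSet Q 0 = Q
        exact translateSet_zero Q
end
end

section
/- If two pairs (s,T) and (s',T) in Y (with s = [t₁,P,t₂], s' = [t₁',P',t₂']) are germ-equivalent under the action of the tiling inverse semigroup on Ω_punc, then the translation vectors coincide: x_s = x_{s'}, i.e., x(t₁) − x(t₂) = x(t₁') − x(t₂'). -/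
/- Shared framework: tilings of ℝⁿ and the tiling inverse semigroup (Kellendonk),
   following Exel–Gonçalves–Starling. -/
open Set
open scoped Classical
noncomputable section

/-- If two pairs `(s,T')` and `(s',T')` are germ-equivalent under the action of the tiling
inverse semigroup on the punctured hull, then the translation vectors coincide:
`x_s = x(t₁) - x(t₂) = x(t₁') - x(t₂') = x_{s'}`. -/
theorem germ_equivalent_same_vector {n : ℕ} (T : Set (Tile n)) (hT : IsTiling T)
    (hFLC : FLC T) (hrep : Repetitive T) (hap : StronglyAperiodic T)
    (p q : GermPt n T) (h : GermRel T p q) :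
    p.s.t1.puncture - p.s.t2.puncture = q.s.t1.puncture - q.s.t2.puncture := by
  obtain ⟨-, e, het, -, g, h', ⟨x, x', -, -, hxe, y, hg1, hg2, -⟩,
    ⟨u, u', -, -, hue, v, hh1, hh2, -⟩, ⟨z, hz1, hz2, -⟩⟩ := h
  have e1 := congrArg Tile.puncture hxe
  have e2 := congrArg Tile.puncture hg1
  have e3 := congrArg Tile.puncture hg2
  have e4 := congrArg Tile.puncture hue
  have e5 := congrArg Tile.puncture hh1
  have e6 := congrArg Tile.puncture hh2
  have e7 := congrArg Tile.puncture hz1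
  have e8 := congrArg Tile.puncture hz2
  have e9 := congrArg Tile.puncture het
  simp only [Tile.translate] at e1 e2 e3 e4 e5 e6 e7 e8
  have hg : g.t1.puncture - g.t2.puncture = p.s.t1.puncture - p.s.t2.puncture := by
    have : p.s.t2.puncture + x = e.t2.puncture + x' := by rw [← e9]; exact e1
    have h2 : g.t1.puncture + y = p.s.t1.puncture + x := e2
    have h3 : g.t2.puncture + y = e.t2.puncture + x' := e3
    have h3' : g.t2.puncture + y = p.s.t2.puncture + x := by rw [h3, ← this]
    have := congrArg₂ (· - ·) h2 h3'
    simpa [sub_eq_sub_iff_add_eq_add] using this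
  have hh : h'.t1.puncture - h'.t2.puncture = q.s.t1.puncture - q.s.t2.puncture := by
    have : q.s.t2.puncture + u = e.t2.puncture + u' := by rw [← e9]; exact e4
    have h2 : h'.t1.puncture + v = q.s.t1.puncture + u := e5
    have h3 : h'.t2.puncture + v = e.t2.puncture + u' := e6
    have h3' : h'.t2.puncture + v = q.s.t2.puncture + u := by rw [h3, ← this]
    have := congrArg₂ (· - ·) h2 h3'
    simpa [sub_eq_sub_iff_add_eq_add] using this
  have hgh : g.t1.puncture - g.t2.puncture = h'.t1.puncture - h'.t2.puncture := by
    rw [← e7, ← e8]; simp [Tile.translate, sub_eq_sub_iff_add_eq_add]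
  rw [← hg, hgh, hh]
end
end
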